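/- Let X be a nontrivial Polish topological vector space over ℝ and let A ⊆ X be a subset that is not Haar-thin in X. Then A belongs to the Kuczma–Ger class 𝓒_X, i.e., every additive function f : X → ℝ whose image f[A] is a bounded subset of ℝ is continuous. -/

import Mathlib

open Set Filter Topology Pointwise MeasureTheory

/-- A Borel set `A` in a topological Abelian group is *Haar-meager* if there is a continuous
map `f` from the Cantor cube `ℕ → Bool` such that `f ⁻¹' (A + x)` is meager for every `x`. -/
def HaarMeager {X : Type*} [TopologicalSpace X] [AddCommGroup X] (A : Set X) : Prop :=
  ∃ f : (ℕ → Bool) → X, Continuous f ∧ ∀ x : X, IsMeagre (f ⁻¹' ((fun a => a + x) '' A))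

/-- A set `A` is *Haar-null* if there is a Borel probability measure `μ` on `X` such that
`μ (A + x) = 0` for every `x ∈ X`. -/
def HaarNull {X : Type*} [MeasurableSpace X] [AddCommGroup X] (A : Set X) : Prop :=
  ∃ μ : Measure X, IsProbabilityMeasure μ ∧ ∀ x : X, μ ((fun a => a + x) '' A) = 0

/-- A subset `T` of the Cantor cube is *thin* if for every coordinate `n`, any two elements
of `T` agreeing at all coordinates except possibly `n` are equal. -/
def IsThinSet (T : Set (ℕ → Bool)) : Prop :=
  ∀ n : ℕ, ∀ s ∈ T, ∀ t ∈ T, (∀ m : ℕ, m ≠ n → s m = t m) → s = t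

/-- A set `A` is *Haar-thin* if there is a continuous map `f` from the Cantor cube such that
`f ⁻¹' (A + x)` is thin for every `x`. -/
def HaarThin {X : Type*} [TopologicalSpace X] [AddCommGroup X] (A : Set X) : Prop :=
  ∃ f : (ℕ → Bool) → X, Continuous f ∧ ∀ x : X, IsThinSet (f ⁻¹' ((fun a => a + x) '' A))

/-- A set `A` is *null-finite* if there is a null sequence `(x n)` such that
`{n | x n + y ∈ A}` is finite for every `y`. -/
def NullFinite {X : Type*} [TopologicalSpace X] [AddCommGroup X] (A : Set X) : Prop :=
  ∃ x : ℕ → X, Tendsto x atTop (nhds 0) ∧ ∀ y : X, {n : ℕ | x n + y ∈ A}.Finite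

/-- A set `A` is *Haar-open* if for every compact `K` and `p ∈ K` there is `x` such that
`K ∩ (A + x)` is a neighborhood of `p` in the subspace `K`. -/
def HaarOpen {X : Type*} [TopologicalSpace X] [AddCommGroup X] (A : Set X) : Prop :=
  ∀ K : Set X, IsCompact K → ∀ p ∈ K, ∃ x : X,
    K ∩ ((fun a => a + x) '' A) ∈ nhdsWithin p K

/-- In a nontrivial Polish topological vector space `X`, every set `A` that is not Haar-thin
belongs to the Kuczma–Ger class `𝓒_X`: every additive `f : X → ℝ` with `f '' A` bounded is
continuous. -/
theorem my_not_haarThin_sub_mem_nhds {X : Type*} [TopologicalSpace X] [AddCommGroup X]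
    [IsTopologicalAddGroup X] [PolishSpace X] (A : Set X) (hA : ¬ HaarThin A) :
    A - A ∈ 𝓝 (0 : X) := by
  by_contra hnhds
  apply hA
  classical
  letI := TopologicalSpace.upgradeIsCompletelyMetrizable X
  -- key: we can always pick a point outside `A - A` moving finitely many points very little
  have key : ∀ (Q : Finset X) (ε : ℝ), 0 < ε →
      ∃ z : X, z ∉ A - A ∧ ∀ q ∈ Q, dist (q + z) q < ε := by
    intro Q ε hε
    by_contra hcon
    push_neg at hcon
    have hnb : {z : X | ∀ q ∈ Q, dist (q + z) q < ε} ∈ 𝓝 (0 : X) := by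
      refine (eventually_all_finset Q).2 ?_
      intro q _
      have hc : Tendsto (fun z : X => dist (q + z) q) (𝓝 0) (𝓝 (dist (q + 0) q)) :=
        ((continuous_const.add continuous_id).dist continuous_const).continuousAt
      rw [add_zero, dist_self] at hc
      exact hc.eventually_lt_const hε
    exact hnhds (Filter.mem_of_superset hnb (fun z hz => by
      by_contra hzA
      obtain ⟨q, hq, hq2⟩ := hcon z hzA
      exact absurd (hz q hq) (not_lt.2 hq2)))
  choose g hg1 hg2 using fun l : List X =>
    key (((Finset.range l.length).powerset).image fun t => ∑ k ∈ t, l.getD k 0)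
      ((1/2 : ℝ) ^ l.length) (by positivity)
  let L : ℕ → List X := fun n => Nat.rec [] (fun _ acc => acc ++ [g acc]) n
  let e : ℕ → X := fun n => g (L n)
  have hLsucc : ∀ n, L (n + 1) = L n ++ [e n] := fun n => rfl
  have hL : ∀ n, L n = (List.range n).map e := by
    intro n
    induction n with
    | zero => rfl
    | succ n ih =>
      calc L (n + 1) = L n ++ [e n] := rfl
        _ = (List.range n).map e ++ [e n] := by rw [ih]
        _ = (List.range (n + 1)).map e := by
            rw [List.range_succ, List.map_append, List.map_singleton]
  have hlen : ∀ n, (L n).length = n := by intro n; rw [hL]; simp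
  have hgetD : ∀ n k, k < n → (L n).getD k 0 = e k := by
    intro n k hk
    rw [hL]
    simp [List.getD_eq_getElem?_getD, List.getElem?_map, List.getElem?_range hk]
  let p : ℕ → (ℕ → Bool) → X := fun N s => ∑ k ∈ Finset.range N, if s k then e k else 0
  have hstep : ∀ s N, dist (p N s) (p (N + 1) s) ≤ 1 * (1/2 : ℝ) ^ N := by
    intro s N
    have hsum : p (N + 1) s = p N s + (if s N then e N else 0) := Finset.sum_range_succ _ N
    by_cases h : s N
    · have hq : p N s ∈
          ((Finset.range (L N).length).powerset).image fun t => ∑ k ∈ t, (L N).getD k 0 := by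
        refine Finset.mem_image.2 ⟨(Finset.range N).filter (fun k => s k = true), ?_, ?_⟩
        · rw [hlen]; exact Finset.mem_powerset.2 (Finset.filter_subset _ _)
        · rw [Finset.sum_filter]
          exact Finset.sum_congr rfl fun k hk => by
            rw [hgetD N k (Finset.mem_range.1 hk)]
      have hd := hg2 (L N) _ hq
      rw [hlen] at hd
      rw [hsum, if_pos h, one_mul, dist_comm]
      exact le_of_lt hd
    · rw [hsum, if_neg h, add_zero, dist_self]; positivity
  have hcauchy : ∀ s, ∃ x, Tendsto (fun N => p N s) atTop (𝓝 x) := fun s =>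
    cauchySeq_tendsto_of_complete
      (cauchySeq_of_le_geometric (1/2) 1 (by norm_num) (hstep s))
  choose F hF using hcauchy
  have hdistF : ∀ s N, dist (p N s) (F s) ≤ 1 * (1/2 : ℝ) ^ N / (1 - 1/2) := fun s N =>
    dist_le_of_le_geometric_of_tendsto (1/2) 1 (by norm_num) (hstep s) (hF s) N
  have hFcont : Continuous F := by
    rw [continuous_iff_continuousAt]
    intro s
    rw [ContinuousAt, Metric.tendsto_nhds]
    intro ε hε
    obtain ⟨N, hN⟩ : ∃ N : ℕ, (1/2 : ℝ) ^ N < ε / 8 :=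
      exists_pow_lt_of_lt_one (by positivity) (by norm_num)
    have hV : {t : ℕ → Bool | ∀ k < N, t k = s k} ∈ 𝓝 s := by
      have heq : {t : ℕ → Bool | ∀ k < N, t k = s k}
          = ⋂ k ∈ Finset.range N, {t : ℕ → Bool | t k = s k} := by
        ext t; simp [Finset.mem_range]
      rw [heq]
      refine IsOpen.mem_nhds ?_ ?_
      · refine isOpen_biInter_finset fun k _ => ?_
        show IsOpen ((fun t : ℕ → Bool => t k) ⁻¹' {s k})
        exact IsOpen.preimage (continuous_apply k) (isOpen_discrete _)
      · simp
    filter_upwards [hV] with t ht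
    have hpt : p N t = p N s :=
      Finset.sum_congr rfl fun k hk => by rw [ht k (Finset.mem_range.1 hk)]
    have h1 := hdistF t N
    have h2 := hdistF s N
    calc dist (F t) (F s) ≤ dist (F t) (p N t) + dist (p N t) (F s) := dist_triangle _ _ _
      _ = dist (p N t) (F t) + dist (p N s) (F s) := by rw [dist_comm, hpt]
      _ < ε := by
          rw [div_eq_mul_inv] at *
          nlinarith [pow_pos (by norm_num : (0:ℝ) < 1/2) N]
  have hsymm : ∀ z : X, z ∈ A - A → -z ∈ A - A := by
    intro z hz
    rw [Set.mem_sub] at hz ⊢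
    obtain ⟨a, ha, b, hb, rfl⟩ := hz
    exact ⟨b, hb, a, ha, by rw [neg_sub]⟩
  refine ⟨F, hFcont, ?_⟩
  intro x n s hs t ht hagree
  by_cases hsn : s n = t n
  · funext m
    by_cases hm : m = n
    · rw [hm, hsn]
    · exact hagree m hm
  · exfalso
    obtain ⟨a, ha, hax⟩ := hs
    obtain ⟨b, hb, hbx⟩ := ht
    have hdiff : F s - F t = (if s n then e n else 0) - (if t n then e n else 0) := by
      have h1 : Tendsto (fun N => p N s - p N t) atTop (𝓝 (F s - F t)) := (hF s).sub (hF t)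
      have h2 : ∀ᶠ N in atTop, p N s - p N t
          = (if s n then e n else 0) - (if t n then e n else 0) := by
        filter_upwards [eventually_ge_atTop (n + 1)] with N hN
        have hsplit : p N s - p N t
            = ∑ k ∈ Finset.range N, ((if s k then e k else 0) - (if t k then e k else 0)) :=
          (Finset.sum_sub_distrib _ _).symm
        rw [hsplit, Finset.sum_eq_single n]
        · intro k _ hk
          rw [hagree k hk, sub_self]
        · intro hn
          exact absurd (Finset.mem_range.2 (lt_of_lt_of_le (Nat.lt_succ_self n) hN)) hn
      exact tendsto_nhds_unique (Filter.Tendsto.congr' h2 h1) tendsto_const_nhds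
    have hsub : F s - F t ∈ A - A := by
      rw [← hax, ← hbx, add_sub_add_right_eq_sub]
      exact Set.sub_mem_sub ha hb
    have hen : e n ∉ A - A := hg1 (L n)
    rcases Bool.eq_false_or_eq_true (s n) with h1 | h1 <;>
      rcases Bool.eq_false_or_eq_true (t n) with h2 | h2
    · exact hsn (h1.trans h2.symm)
    all_goals try exact hsn (h1.trans h2.symm)
    all_goals
      simp only [h1, h2] at hdiff
      norm_num at hdiff
      rw [hdiff] at hsub
      first
      | exact hen hsub
      | · have hmem := hsymm _ hsub
          rw [neg_neg] at hmem
          exact hen hmem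


theorem my_additive_cont {X : Type*} [TopologicalSpace X] [AddCommGroup X] [Module ℝ X]
    [IsTopologicalAddGroup X] [ContinuousSMul ℝ X]
    (f : X → ℝ) (hadd : ∀ x y : X, f (x + y) = f x + f y)
    (U : Set X) (hU : U ∈ 𝓝 (0 : X)) (M : ℝ) (hM : ∀ x ∈ U, |f x| ≤ M) :
    Continuous f := by
  set F : X →+ ℝ := AddMonoidHom.mk' f (fun x y => hadd x y) with hFdef
  have hf0 : f 0 = 0 := F.map_zero
  have hM0 : 0 ≤ M := by
    have := hM 0 (mem_of_mem_nhds hU)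
    rw [hf0] at this
    simpa using this
  have h0 : Tendsto f (𝓝 0) (𝓝 0) := by
    rw [NormedAddCommGroup.tendsto_nhds_zero]
    intro ε hε
    obtain ⟨n, hn⟩ := exists_nat_gt (M / ε)
    have hn0 : (0 : ℝ) < n := lt_of_le_of_lt (div_nonneg hM0 hε.le) hn
    have hMε : M < n * ε := (div_lt_iff₀ hε).mp hn
    have hmem : (n : ℝ)⁻¹ • U ∈ 𝓝 (0 : X) := by
      have := (smul_mem_nhds_smul_iff₀ (inv_ne_zero (ne_of_gt hn0)) (x := (0 : X))).2 hU
      rwa [smul_zero] at this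
    filter_upwards [hmem] with x hx
    obtain ⟨u, hu, rfl⟩ := hx
    have hsm : (n : ℝ) • ((n : ℝ)⁻¹ • u) = u := by
      rw [smul_smul, mul_inv_cancel₀ (ne_of_gt hn0), one_smul]
    have h1 : f u = n * f ((n : ℝ)⁻¹ • u) := by
      calc f u = f ((n : ℝ) • ((n : ℝ)⁻¹ • u)) := by rw [hsm]
        _ = f (n • ((n : ℝ)⁻¹ • u)) := by rw [Nat.cast_smul_eq_nsmul]
        _ = n * f ((n : ℝ)⁻¹ • u) := by
            show F (n • ((n : ℝ)⁻¹ • u)) = n * F ((n : ℝ)⁻¹ • u)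
            rw [map_nsmul, nsmul_eq_mul]
    have hub := hM u hu
    rw [h1, abs_mul, Nat.abs_cast] at hub
    rw [Real.norm_eq_abs]
    nlinarith [abs_nonneg (f ((n : ℝ)⁻¹ • u))]
  rw [continuous_iff_continuousAt]
  intro x₀
  have ht : Tendsto (fun x => f (x - x₀) + f x₀) (𝓝 x₀) (𝓝 (0 + f x₀)) :=
    (h0.comp ((continuous_id.sub continuous_const).tendsto' x₀ 0 (by simp))).add
      tendsto_const_nhds
  rw [zero_add] at ht
  exact ht.congr fun x => by rw [← hadd, sub_add_cancel]


theorem statement3 {X : Type*} [TopologicalSpace X] [AddCommGroup X] [Module ℝ X]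
    [IsTopologicalAddGroup X] [ContinuousSMul ℝ X] [PolishSpace X] [Nontrivial X]
    (A : Set X) (hA : ¬ HaarThin A)
    (f : X → ℝ) (hadd : ∀ x y : X, f (x + y) = f x + f y)
    (hbdd : Bornology.IsBounded (f '' A)) :
    Continuous f := by
  have hnh := my_not_haarThin_sub_mem_nhds A hA
  obtain ⟨M, hM⟩ := isBounded_iff_forall_norm_le.1 hbdd
  apply my_additive_cont f hadd (A - A) hnh (2 * M)
  intro z hz
  rw [Set.mem_sub] at hz
  obtain ⟨a, ha, b, hb, rfl⟩ := hz
  have hfa := hM (f a) ⟨a, ha, rfl⟩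
  have hfb := hM (f b) ⟨b, hb, rfl⟩
  rw [Real.norm_eq_abs] at hfa hfb
  have hsub : f (a - b) = f a - f b := by
    have h := hadd (a - b) b
    rw [sub_add_cancel] at h
    linarith
  rw [hsub]
  calc |f a - f b| ≤ |f a| + |f b| := by
        rw [sub_eq_add_neg]
        exact (abs_add_le _ _).trans (by rw [abs_neg])
    _ ≤ 2 * M := by linarith
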